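/- Let n ≥ 3 and let t be a nonzero complex number. Then the only ℂ-subspaces U of ℂ^{n−1} satisfying S′_i(t)·U ⊆ U for all 1 ≤ i ≤ n−1 are U = 0 and U = ℂ^{n−1} (i.e. the complex specialization of the representation η₁′ is irreducible) if and only if (n−2)·t ≠ 2n−2 and t ≠ 2. -/

import Mathlib

set_option maxRecDepth 10000


noncomputable section
open Matrix

/-- The complex `m × m` matrix agreeing with the identity except in rows and columns
`i, i+1` (0-indexed), where it has the `2 × 2` block `[[1-t, t], [2-t, t-1]]`. -/
def SmatC (m : ℕ) (t : ℂ) (i : ℕ) : Matrix (Fin m) (Fin m) ℂ :=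
  Matrix.of fun j k =>
    if j.val = i ∧ k.val = i then 1 - t
    else if j.val = i ∧ k.val = i + 1 then t
    else if j.val = i + 1 ∧ k.val = i then 2 - t
    else if j.val = i + 1 ∧ k.val = i + 1 then t - 1
    else if j = k then 1 else 0

/-- The complex `m × m` matrix agreeing with the identity except in its last row,
which is `(t-2, t-2, …, t-2, -1)`. -/
def SlastC (m : ℕ) (t : ℂ) : Matrix (Fin m) (Fin m) ℂ :=
  Matrix.of fun j k =>
    if j.val = m - 1 then (if k.val = m - 1 then -1 else t - 2)
    else if j = k then 1 else 0

def wvec (m : ℕ) (t : ℂ) (i : ℕ) : Fin m → ℂ :=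
  fun k => if k.val = i then t else if k.val = i + 1 then t - 2 else 0

def evec (m : ℕ) : Fin m → ℂ := fun k => if k.val = m - 1 then 1 else 0

def bvec (m : ℕ) (j : Fin m) : Fin m → ℂ := fun k => if j = k then 1 else 0

lemma wvec_lo {m : ℕ} {t : ℂ} {i : ℕ} (h : i < m) : wvec m t i ⟨i, h⟩ = t := by
  simp [wvec]

lemma wvec_hi {m : ℕ} {t : ℂ} {i : ℕ} (h : i + 1 < m) : wvec m t i ⟨i + 1, h⟩ = t - 2 := by
  simp [wvec]

lemma wvec_other {m : ℕ} {t : ℂ} {i : ℕ} {k : Fin m} (h1 : k.val ≠ i) (h2 : k.val ≠ i + 1) :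
    wvec m t i k = 0 := by
  simp [wvec, h1, h2]

lemma evec_last {m : ℕ} (h : m - 1 < m) : evec m ⟨m - 1, h⟩ = 1 := by simp [evec]

lemma evec_other {m : ℕ} {k : Fin m} (h : k.val ≠ m - 1) : evec m k = 0 := by
  simp [evec, h]

lemma sum_ite_one' {m : ℕ} (a : ℕ) (ha : a < m) (f : Fin m → ℂ) :
    ∑ k, (if k.val = a then f k else 0) = f ⟨a, ha⟩ := by
  have h : ∀ k : Fin m, (if k.val = a then f k else 0)
      = (if k = ⟨a, ha⟩ then f k else 0) := by
    intro k; congr 1; simp [Fin.ext_iff]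
  rw [Finset.sum_congr rfl fun k _ => h k, Finset.sum_ite_eq' Finset.univ]
  simp

lemma sum_ite_two' {m : ℕ} (a b : ℕ) (ha : a < m) (hb : b < m) (hab : a ≠ b)
    (f g : Fin m → ℂ) :
    ∑ k, (if k.val = a then f k else if k.val = b then g k else 0)
      = f ⟨a, ha⟩ + g ⟨b, hb⟩ := by
  have h : ∀ k : Fin m, (if k.val = a then f k else if k.val = b then g k else 0)
      = (if k.val = a then f k else 0) + (if k.val = b then g k else 0) := by
    intro k
    by_cases h1 : k.val = a
    · rw [if_pos h1, if_pos h1, if_neg (by omega), add_zero]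
    · rw [if_neg h1, if_neg h1, zero_add]
  rw [Finset.sum_congr rfl fun k _ => h k, Finset.sum_add_distrib,
    sum_ite_one' a ha, sum_ite_one' b hb]

lemma smat_mulVec {m : ℕ} (t : ℂ) {i : ℕ} (hi : i + 1 < m) (v : Fin m → ℂ) :
    SmatC m t i *ᵥ v
      = v + (v ⟨i + 1, hi⟩ - v ⟨i, Nat.lt_of_succ_lt hi⟩) • wvec m t i := by
  have hi0 : i < m := Nat.lt_of_succ_lt hi
  funext j
  show ∑ k, SmatC m t i j k * v k = _
  simp only [Pi.add_apply, Pi.smul_apply, smul_eq_mul]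
  by_cases hj1 : j.val = i
  · have hrow : ∀ k : Fin m, SmatC m t i j k * v k
        = (if k.val = i then (1 - t) * v k else if k.val = i + 1 then t * v k else 0) := by
      intro k
      simp only [SmatC, of_apply, hj1]
      split_ifs <;> first | ring1 | (exfalso; omega) | (exfalso; simp_all [Fin.ext_iff] <;> omega)
    rw [Finset.sum_congr rfl fun k _ => hrow k, sum_ite_two' i (i+1) hi0 hi (by omega)]
    have hje : j = ⟨i, hi0⟩ := Fin.ext hj1
    simp only [hje, wvec_lo hi0]
    ring
  · by_cases hj2 : j.val = i + 1
    · have hrow : ∀ k : Fin m, SmatC m t i j k * v k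
          = (if k.val = i then (2 - t) * v k else if k.val = i + 1 then (t - 1) * v k else 0) := by
        intro k
        simp only [SmatC, of_apply, hj2]
        split_ifs <;> first | ring1 | (exfalso; omega) | (exfalso; simp_all [Fin.ext_iff] <;> omega)
      rw [Finset.sum_congr rfl fun k _ => hrow k, sum_ite_two' i (i+1) hi0 hi (by omega)]
      have hje : j = ⟨i + 1, hi⟩ := Fin.ext hj2
      simp only [hje, wvec_hi hi]
      ring
    · have hrow : ∀ k : Fin m, SmatC m t i j k * v k = (if k.val = j.val then v k else 0) := by
        intro k
        simp only [SmatC, of_apply]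
        split_ifs <;> first | ring1 | (exfalso; omega) | (exfalso; simp_all [Fin.ext_iff] <;> omega)
      rw [Finset.sum_congr rfl fun k _ => hrow k, sum_ite_one' j.val j.isLt,
        wvec_other hj1 hj2]
      simp

lemma slast_mulVec {m : ℕ} (hm : 1 ≤ m) (t : ℂ) (v : Fin m → ℂ) :
    SlastC m t *ᵥ v
      = v + ((t - 2) * ∑ k, v k - t * v ⟨m - 1, by omega⟩) • evec m := by
  funext j
  show ∑ k, SlastC m t j k * v k = _
  simp only [Pi.add_apply, Pi.smul_apply, smul_eq_mul]
  by_cases hj : j.val = m - 1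
  · have hrow : ∀ k : Fin m, SlastC m t j k * v k
        = (t - 2) * v k + (if k.val = m - 1 then (1 - t) * v k else 0) := by
      intro k
      simp only [SlastC, of_apply, hj]
      split_ifs <;> first | ring1 | (exfalso; omega) | (exfalso; simp_all [Fin.ext_iff] <;> omega)
    rw [Finset.sum_congr rfl fun k _ => hrow k, Finset.sum_add_distrib,
      sum_ite_one' (m-1) (by omega)]
    have hje : j = ⟨m - 1, by omega⟩ := Fin.ext hj
    simp only [hje, evec_last (show m - 1 < m by omega), ← Finset.mul_sum]
    ring
  · have hrow : ∀ k : Fin m, SlastC m t j k * v k = (if k.val = j.val then v k else 0) := by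
      intro k
      simp only [SlastC, of_apply, hj]
      split_ifs <;> first | ring1 | (exfalso; omega) | (exfalso; simp_all [Fin.ext_iff] <;> omega)
    rw [Finset.sum_congr rfl fun k _ => hrow k, sum_ite_one' j.val j.isLt,
      evec_other hj]
    simp

lemma smul_mem_cancel {U : Submodule ℂ (Fin m → ℂ)} {c : ℂ} (hc : c ≠ 0)
    {v : Fin m → ℂ} (h : c • v ∈ U) : v ∈ U := by
  have := U.smul_mem c⁻¹ h
  rwa [smul_smul, inv_mul_cancel₀ hc, one_smul] at this

lemma hard_dir (m : ℕ) (hm : 2 ≤ m) (t : ℂ) (ht : t ≠ 0) (ht2 : t ≠ 2)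
    (htm : (t - 2) * ((m : ℂ) - 1) ≠ 2)
    (U : Submodule ℂ (Fin m → ℂ))
    (hW : ∀ (i : ℕ) (h : i + 1 < m), ∀ v ∈ U,
      ((v ⟨i + 1, h⟩ - v ⟨i, Nat.lt_of_succ_lt h⟩) • wvec m t i) ∈ U)
    (hE : ∀ v ∈ U, (((t - 2) * ∑ k, v k - t * v ⟨m - 1, by omega⟩) • evec m) ∈ U) :
    U = ⊥ ∨ U = ⊤ := by
  by_cases hbot : U = ⊥
  · exact Or.inl hbot
  right
  obtain ⟨v, hv, hvne⟩ := (Submodule.ne_bot_iff U).mp hbot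
  have ht2' : t - 2 ≠ 0 := sub_ne_zero_of_ne ht2
  -- divide out nonzero scalars
  have hW' : ∀ (i : ℕ) (h : i + 1 < m), ∀ w ∈ U,
      w ⟨i + 1, h⟩ ≠ w ⟨i, Nat.lt_of_succ_lt h⟩ → wvec m t i ∈ U := by
    intro i h w hw hne
    exact smul_mem_cancel (sub_ne_zero_of_ne hne) (hW i h w hw)
  -- move right
  have hup : ∀ (i : ℕ), i + 2 < m → wvec m t i ∈ U → wvec m t (i + 1) ∈ U := by
    intro i h hw
    apply hW' (i + 1) (by omega) _ hw
    have h1 : wvec m t i ⟨i + 1, by omega⟩ = t - 2 := wvec_hi (by omega)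
    have h2 : wvec m t i ⟨i + 1 + 1, by omega⟩ = 0 :=
      wvec_other (show i + 1 + 1 ≠ i by omega) (show i + 1 + 1 ≠ i + 1 by omega)
    rw [h1, h2]
    exact fun hc => ht2' (by rw [← hc])
  have hwtop : ∀ (i : ℕ), i + 1 < m → wvec m t i ∈ U → wvec m t (m - 2) ∈ U := by
    have H : ∀ d i, i + 1 + d < m → wvec m t i ∈ U → wvec m t (i + d) ∈ U := by
      intro d
      induction d with
      | zero => intro i h hw; simpa using hw
      | succ d ih =>
        intro i h hw
        have h2 := hup (i + d) (by omega) (ih i (by omega) hw)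
        rwa [show i + d + 1 = i + (d + 1) by omega] at h2
    intro i h hw
    have := H (m - 2 - i) i (by omega) hw
    rwa [show i + (m - 2 - i) = m - 2 by omega] at this
  -- move left
  have hdown : ∀ (i : ℕ), i + 2 < m → wvec m t (i + 1) ∈ U → wvec m t i ∈ U := by
    intro i h hw
    apply hW' i (by omega) _ hw
    have h1 : wvec m t (i + 1) ⟨i + 1, by omega⟩ = t := wvec_lo (by omega)
    have h2 : wvec m t (i + 1) ⟨i, by omega⟩ = 0 :=
      wvec_other (show i ≠ i + 1 by omega) (show i ≠ i + 1 + 1 by omega)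
    rw [h1, h2]
    exact fun hc => ht (by rw [← hc])
  have hwall : wvec m t (m - 2) ∈ U → ∀ (i : ℕ), i + 1 < m → wvec m t i ∈ U := by
    intro hw
    have H : ∀ d, d + 1 < m → wvec m t (m - 2 - d) ∈ U := by
      intro d
      induction d with
      | zero => intro _; simpa using hw
      | succ d ih =>
        intro h
        have h1 := ih (by omega)
        apply hdown (m - 2 - (d + 1)) (by omega)
        rw [show m - 2 - (d + 1) + 1 = m - 2 - d by omega]
        exact h1
    intro i h
    have := H (m - 2 - i) (by omega)
    rwa [show m - 2 - (m - 2 - i) = i by omega] at this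
  -- from the top w vector get evec
  have hsum_w : ∀ (i : ℕ) (h : i + 1 < m), ∑ k, wvec m t i k = t + (t - 2) := by
    intro i h
    have heq : ∀ k : Fin m, wvec m t i k
        = (if k.val = i then (fun _ : Fin m => t) k
           else if k.val = i + 1 then (fun _ : Fin m => t - 2) k else 0) := by
      intro k; rfl
    rw [Finset.sum_congr rfl fun k _ => heq k,
      sum_ite_two' i (i + 1) (by omega) h (by omega)]
  have hEvec_of_w : wvec m t (m - 2) ∈ U → evec m ∈ U := by
    intro hw
    have h1 := hE _ hw
    rw [hsum_w (m - 2) (by omega)] at h1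
    have h2 : wvec m t (m - 2) ⟨m - 1, by omega⟩ = t - 2 := by
      have : (⟨m - 1, by omega⟩ : Fin m) = ⟨m - 2 + 1, by omega⟩ := Fin.ext (show m - 1 = m - 2 + 1 by omega)
      rw [this]; exact wvec_hi (by omega)
    rw [h2] at h1
    refine smul_mem_cancel (c := (t - 2) * (t + (t - 2)) - t * (t - 2)) ?_ h1
    have : (t - 2) * (t + (t - 2)) - t * (t - 2) = (t - 2) ^ 2 := by ring
    rw [this]
    exact pow_ne_zero 2 ht2'
  have hW_of_e : evec m ∈ U → wvec m t (m - 2) ∈ U := by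
    intro he
    apply hW' (m - 2) (by omega) _ he
    have h1 : evec m ⟨m - 2 + 1, by omega⟩ = 1 := by
      have : (⟨m - 2 + 1, by omega⟩ : Fin m) = ⟨m - 1, by omega⟩ := Fin.ext (show m - 2 + 1 = m - 1 by omega)
      rw [this]; exact evec_last (by omega)
    have h2 : evec m ⟨m - 2, by omega⟩ = 0 := evec_other (show m - 2 ≠ m - 1 by omega)
    rw [h1, h2]
    exact one_ne_zero
  -- get evec into U
  have he : evec m ∈ U := by
    have h0m : 0 < m := by omega
    by_cases hc : ∀ (i : ℕ) (h : i + 1 < m), v ⟨i + 1, h⟩ = v ⟨i, Nat.lt_of_succ_lt h⟩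
    · have hconst : ∀ (j : ℕ) (hj : j < m), v ⟨j, hj⟩ = v ⟨0, h0m⟩ := by
        intro j
        induction j with
        | zero => intro hj; rfl
        | succ j ih => intro hj; rw [hc j hj]; exact ih (by omega)
      have hv0 : v ⟨0, h0m⟩ ≠ 0 := by
        intro h0
        exact hvne (funext fun k => by
          have := hconst k.val k.isLt
          simp only [Fin.eta] at this
          rw [this, h0]; rfl)
      have hsum : ∑ k, v k = (m : ℂ) * v ⟨0, h0m⟩ := by
        rw [Finset.sum_congr rfl fun k _ => by
          have := hconst k.val k.isLt
          simpa only [Fin.eta] using this]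
        rw [Finset.sum_const, Finset.card_univ, Fintype.card_fin, nsmul_eq_mul]
      have h1 := hE v hv
      rw [hsum, hconst (m - 1) (by omega)] at h1
      refine hEvec_of_w (hW_of_e (smul_mem_cancel (c := _) ?_ h1))
      have hrw : (t - 2) * ((m : ℂ) * v ⟨0, h0m⟩) - t * v ⟨0, h0m⟩
          = v ⟨0, h0m⟩ * ((t - 2) * ((m : ℂ) - 1) - 2) := by ring
      rw [hrw]
      exact mul_ne_zero hv0 (sub_ne_zero_of_ne htm)
    · push_neg at hc
      obtain ⟨i, hi, hne⟩ := hc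
      exact hEvec_of_w (hwtop i hi (hW' i hi v hv hne))
  have hwm2 : wvec m t (m - 2) ∈ U := hW_of_e he
  -- all basis vectors
  have hball : ∀ j : Fin m, bvec m j ∈ U := by
    have H : ∀ d, d ≤ m - 1 → bvec m ⟨m - 1 - d, by omega⟩ ∈ U := by
      intro d
      induction d with
      | zero =>
        intro _
        have hbe : bvec m ⟨m - 1 - 0, by omega⟩ = evec m := by
          funext k
          simp only [bvec, evec, Fin.ext_iff]
          by_cases h : (k : ℕ) = m - 1
          · rw [if_pos (by simpa using h.symm), if_pos h]
          · rw [if_neg (by simpa using fun hh => h hh.symm), if_neg h]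
        rw [hbe]; exact he
      | succ d ih =>
        intro hd
        have hb1 : bvec m ⟨m - 1 - d, by omega⟩ ∈ U := ih (by omega)
        set j : ℕ := m - 1 - (d + 1) with hjdef
        have hj1 : j + 1 = m - 1 - d := by omega
        have hj1m : j + 1 < m := by omega
        have hjm : j < m := by omega
        have hb1' : bvec m ⟨j + 1, hj1m⟩ ∈ U := by
          have : (⟨m - 1 - d, by omega⟩ : Fin m) = ⟨j + 1, hj1m⟩ := Fin.ext (show m - 1 - d = j + 1 by omega)
          rwa [this] at hb1
        have hw : wvec m t j ∈ U := hwall hwm2 j hj1m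
        have key : bvec m ⟨j, hjm⟩ = t⁻¹ • (wvec m t j - (t - 2) • bvec m ⟨j + 1, hj1m⟩) := by
          funext k
          simp only [bvec, wvec, Pi.smul_apply, Pi.sub_apply, smul_eq_mul, Fin.ext_iff]
          by_cases h1 : (k : ℕ) = j
          · rw [if_pos (by simpa using h1.symm), if_pos h1, if_neg (by simpa using by omega)]
            field_simp
            ring
          · rw [if_neg (by simpa using fun hh => h1 hh.symm), if_neg h1]
            by_cases h2 : (k : ℕ) = j + 1
            · rw [if_pos h2, if_pos (by simpa using h2.symm)]
              field_simp
              ring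
            · rw [if_neg h2, if_neg (by simpa using fun hh => h2 hh.symm)]
              simp
        have : bvec m ⟨j, hjm⟩ ∈ U := by
          rw [key]
          exact U.smul_mem _ (U.sub_mem hw (U.smul_mem _ hb1'))
        exact this
    intro j
    have := H (m - 1 - j.val) (by omega)
    have hje : (⟨m - 1 - (m - 1 - j.val), by omega⟩ : Fin m) = j := Fin.ext (show m - 1 - (m - 1 - j.val) = j.val by omega)
    rwa [hje] at this
  rw [eq_top_iff]
  intro x _
  rw [pi_eq_sum_univ x]
  exact Submodule.sum_mem U fun j _ => U.smul_mem _ (hball j)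

/-- For `n ≥ 3` and a nonzero complex number `t`, the only `ℂ`-subspaces of
`ℂ^{n-1}` invariant under all the matrices `S′ᵢ(t)` (the complex specialization of the
composition factor `η₁′`; here 0-indexed: for `i.val < n-2` the matrix with block
`[[1-t, t], [2-t, t-1]]` in rows/columns `i, i+1`, and for `i.val = n-2` the matrix
whose last row is `(t-2, …, t-2, -1)`) are `0` and `ℂ^{n-1}` if and only if
`(n-2)·t ≠ 2n-2` and `t ≠ 2`. -/
theorem statement5 (n : ℕ) (hn : 3 ≤ n) (t : ℂ) (ht : t ≠ 0) :
    (∀ U : Submodule ℂ (Fin (n - 1) → ℂ),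
        (∀ i : Fin (n - 1), ∀ v ∈ U,
          (if i.val = n - 2 then SlastC (n - 1) t else SmatC (n - 1) t i.val) *ᵥ v ∈ U) →
        U = ⊥ ∨ U = ⊤) ↔
    (((n : ℂ) - 2) * t ≠ 2 * (n : ℂ) - 2 ∧ t ≠ 2) := by
  have hm : 2 ≤ n - 1 := by omega
  have hcast : ((n - 1 : ℕ) : ℂ) = (n : ℂ) - 1 := by
    rw [Nat.cast_sub (by omega : 1 ≤ n), Nat.cast_one]
  constructor
  · intro H
    constructor
    · -- if (n-2) t = 2n-2, the all-ones vector spans an invariant line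
      intro hcond
      set o : Fin (n - 1) → ℂ := fun _ => 1 with ho
      have hfix : ∀ i : Fin (n - 1),
          (if i.val = n - 2 then SlastC (n - 1) t else SmatC (n - 1) t i.val) *ᵥ o = o := by
        intro i
        by_cases hi : i.val = n - 2
        · rw [if_pos hi, slast_mulVec (by omega : 1 ≤ n - 1) t o]
          have hsum : ∑ k : Fin (n - 1), o k = ((n - 1 : ℕ) : ℂ) := by
            simp [ho, Finset.card_univ]
          rw [hsum]
          have hzero : (t - 2) * ((n - 1 : ℕ) : ℂ) - t * o ⟨n - 1 - 1, by omega⟩ = 0 := by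
            show (t - 2) * ((n - 1 : ℕ) : ℂ) - t * 1 = 0
            rw [hcast]
            linear_combination hcond
          rw [hzero, zero_smul, add_zero]
        · rw [if_neg hi, smat_mulVec t (show i.val + 1 < n - 1 by omega) o]
          show o + (1 - 1) • _ = o
          rw [sub_self, zero_smul, add_zero]
      have hinv : ∀ i : Fin (n - 1), ∀ w ∈ Submodule.span ℂ {o},
          (if i.val = n - 2 then SlastC (n - 1) t else SmatC (n - 1) t i.val) *ᵥ w
            ∈ Submodule.span ℂ {o} := by
        intro i w hw
        rw [Submodule.mem_span_singleton] at hw ⊢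
        obtain ⟨c, rfl⟩ := hw
        exact ⟨c, by rw [mulVec_smul, hfix i]⟩
      rcases H _ hinv with h | h
      · have hmem : o ∈ (⊥ : Submodule ℂ (Fin (n - 1) → ℂ)) :=
          h ▸ Submodule.mem_span_singleton_self o
        rw [Submodule.mem_bot] at hmem
        have := congrFun hmem ⟨0, by omega⟩
        simp [ho] at this
      · have hb : (fun k : Fin (n - 1) => if k.val = 0 then (1 : ℂ) else 0)
            ∈ Submodule.span ℂ {o} := by rw [h]; trivial
        rw [Submodule.mem_span_singleton] at hb
        obtain ⟨c, hc⟩ := hb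
        have h0 := congrFun hc ⟨0, by omega⟩
        have h1 := congrFun hc ⟨1, by omega⟩
        simp [ho] at h0 h1
        rw [h0] at h1
        exact one_ne_zero h1
    · -- if t = 2, the first basis vector spans an invariant line
      intro ht2
      subst ht2
      set b0 : Fin (n - 1) → ℂ := fun k => if k.val = 0 then 1 else 0 with hb0
      have hfix : ∀ i : Fin (n - 1), ∃ d : ℂ,
          (if i.val = n - 2 then SlastC (n - 1) 2 else SmatC (n - 1) 2 i.val) *ᵥ b0
            = d • b0 := by
        intro i
        by_cases hi : i.val = n - 2
        · refine ⟨1, ?_⟩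
          rw [if_pos hi, slast_mulVec (by omega : 1 ≤ n - 1) 2 b0]
          have hb0l : b0 ⟨n - 1 - 1, by omega⟩ = 0 := by
            show (if n - 1 - 1 = 0 then (1 : ℂ) else 0) = 0
            rw [if_neg (by omega)]
          rw [hb0l]
          rw [show (2 : ℂ) - 2 = 0 by ring]
          rw [zero_mul, mul_zero, sub_zero, zero_smul, add_zero, one_smul]
        · rw [if_neg hi]
          by_cases hi0 : i.val = 0
          · refine ⟨-1, ?_⟩
            rw [smat_mulVec 2 (show i.val + 1 < n - 1 by omega) b0]
            have e1 : b0 ⟨i.val + 1, by omega⟩ = 0 := by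
              show (if i.val + 1 = 0 then (1 : ℂ) else 0) = 0
              rw [if_neg (by omega)]
            have e2 : b0 ⟨i.val, by omega⟩ = 1 := by
              show (if i.val = 0 then (1 : ℂ) else 0) = 1
              rw [if_pos hi0]
            rw [e1, e2]
            funext k
            simp only [Pi.add_apply, Pi.smul_apply, smul_eq_mul, hb0, wvec, hi0]
            by_cases hk : k.val = 0
            · simp only [if_pos hk]; ring
            · simp only [if_neg hk]
              by_cases hk1 : k.val = 0 + 1
              · simp only [if_pos hk1]; ring
              · simp only [if_neg hk1]; ring
          · refine ⟨1, ?_⟩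
            rw [smat_mulVec 2 (show i.val + 1 < n - 1 by omega) b0]
            have e1 : b0 ⟨i.val + 1, by omega⟩ = 0 := by
              show (if i.val + 1 = 0 then (1 : ℂ) else 0) = 0
              rw [if_neg (by omega)]
            have e2 : b0 ⟨i.val, by omega⟩ = 0 := by
              show (if i.val = 0 then (1 : ℂ) else 0) = 0
              rw [if_neg hi0]
            rw [e1, e2, sub_self, zero_smul, add_zero, one_smul]
      have hinv : ∀ i : Fin (n - 1), ∀ w ∈ Submodule.span ℂ {b0},
          (if i.val = n - 2 then SlastC (n - 1) 2 else SmatC (n - 1) 2 i.val) *ᵥ w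
            ∈ Submodule.span ℂ {b0} := by
        intro i w hw
        rw [Submodule.mem_span_singleton] at hw ⊢
        obtain ⟨c, rfl⟩ := hw
        obtain ⟨d, hd⟩ := hfix i
        exact ⟨c * d, by rw [mulVec_smul, hd, smul_smul]⟩
      rcases H _ hinv with h | h
      · have hmem : b0 ∈ (⊥ : Submodule ℂ (Fin (n - 1) → ℂ)) :=
          h ▸ Submodule.mem_span_singleton_self b0
        rw [Submodule.mem_bot] at hmem
        have := congrFun hmem ⟨0, by omega⟩
        simp [hb0] at this
      · have hb : (fun _ : Fin (n - 1) => (1 : ℂ)) ∈ Submodule.span ℂ {b0} := by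
          rw [h]; trivial
        rw [Submodule.mem_span_singleton] at hb
        obtain ⟨c, hc⟩ := hb
        have h1 := congrFun hc ⟨1, by omega⟩
        simp only [Pi.smul_apply, smul_eq_mul, hb0] at h1
        rw [if_neg (by omega : ¬(1 : ℕ) = 0), mul_zero] at h1
        exact one_ne_zero h1.symm
  · rintro ⟨h1, h2⟩ U hU
    apply hard_dir (n - 1) hm t ht h2
    · rw [hcast]
      intro hcc
      apply h1
      linear_combination hcc
    · intro i h w hw
      have hmem := hU ⟨i, by omega⟩ w hw
      rw [if_neg (show ¬(i = n - 2) by omega), smat_mulVec t h w] at hmem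
      have := U.sub_mem hmem hw
      simpa using this
    · intro w hw
      have hmem := hU ⟨n - 2, by omega⟩ w hw
      rw [if_pos rfl, slast_mulVec (by omega : 1 ≤ n - 1) t w] at hmem
      have := U.sub_mem hmem hw
      simpa using this
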